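/- Let R : ℝ^d → ℝ be continuous and nonnegative, and for λ ∈ ℝ^V (V a finite set of nonzero vectors spanning ℝ^d) define Q(λ) = {p ∈ ℝ^d : p · e ≤ λ_e for all e ∈ V}. If Q(λ) is bounded for all λ in a neighborhood, then the map λ ↦ ∫_{Q(λ)} R(p) dp is continuous at λ. -/
import Mathlib


open scoped RealInnerProductSpace
open MeasureTheory Filter

/-- A hyperplane `{p | ⟪p, v⟫ = c}` with `v ≠ 0` is Lebesgue-null. -/
lemma hyperplane_null {d : ℕ} (v : EuclideanSpace ℝ (Fin d)) (hv : v ≠ 0) (c : ℝ) :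
    volume {p : EuclideanSpace ℝ (Fin d) | ⟪p, v⟫ = c} = 0 := by
  set f : EuclideanSpace ℝ (Fin d) →ₗ[ℝ] ℝ :=
    { toFun := fun p => ⟪p, v⟫
      map_add' := fun x y => inner_add_left x y v
      map_smul' := fun r x => by
        simp only [RingHom.id_apply, smul_eq_mul]
        exact real_inner_smul_left x v r }
  have hvv : ⟪v, v⟫ ≠ 0 := fun h => hv (inner_self_eq_zero.mp h)
  have hker : LinearMap.ker f ≠ ⊤ := by
    intro h
    have : f v = 0 := by
      have := LinearMap.ker_eq_top.mp h
      simp [this]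
    exact hvv this
  have h0 : volume {p : EuclideanSpace ℝ (Fin d) | f p = 0} = 0 := by
    have : {p : EuclideanSpace ℝ (Fin d) | f p = 0} = (LinearMap.ker f : Set _) := by
      ext p; simp [LinearMap.mem_ker]
    rw [this]
    exact Measure.addHaar_submodule volume _ hker
  set p₀ : EuclideanSpace ℝ (Fin d) := (c / ⟪v, v⟫) • v with hp₀def
  have hfp₀ : f p₀ = c := by
    show ⟪(c / ⟪v, v⟫) • v, v⟫ = c
    rw [real_inner_smul_left]
    exact div_mul_cancel₀ c hvv
  have hset : {p : EuclideanSpace ℝ (Fin d) | ⟪p, v⟫ = c}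
      = (fun p => p + -p₀) ⁻¹' {p : EuclideanSpace ℝ (Fin d) | f p = 0} := by
    ext p
    have : f (p + -p₀) = ⟪p, v⟫ - c := by
      rw [map_add, map_neg, hfp₀]
      show ⟪p, v⟫ + -c = ⟪p, v⟫ - c
      ring
    simp only [Set.mem_preimage, Set.mem_setOf_eq, this]
    constructor
    · intro h; rw [h]; ring
    · intro h; linarith
  rw [hset, measure_preimage_add_right]
  exact h0

/-- Continuity of `λ ↦ ∫_{Q(λ)} R` for a continuous nonnegative density and
polyhedra `Q(λ)` that are bounded for `λ` in a neighborhood. -/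
theorem integral_over_polyhedron_continuous {d : ℕ} {ι : Type*} [Fintype ι]
    (e : ι → EuclideanSpace ℝ (Fin d)) (he : ∀ i, e i ≠ 0)
    (hspan : Submodule.span ℝ (Set.range e) = ⊤)
    (R : EuclideanSpace ℝ (Fin d) → ℝ) (hR : Continuous R) (hR0 : ∀ p, 0 ≤ R p)
    (lam₀ : ι → ℝ)
    (hbdd : ∀ᶠ lam in nhds lam₀,
      Bornology.IsBounded {p : EuclideanSpace ℝ (Fin d) | ∀ i, ⟪p, e i⟫ ≤ lam i}) :
    ContinuousAt (fun lam : ι → ℝ =>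
      ∫ p in {p : EuclideanSpace ℝ (Fin d) | ∀ i, ⟪p, e i⟫ ≤ lam i}, R p) lam₀ := by
  classical
  set Q : (ι → ℝ) → Set (EuclideanSpace ℝ (Fin d)) :=
    fun lam => {p | ∀ i, ⟪p, e i⟫ ≤ lam i} with hQdef
  have hQc : ∀ lam, IsClosed (Q lam) := by
    intro lam
    have : Q lam = ⋂ i, {p : EuclideanSpace ℝ (Fin d) | ⟪p, e i⟫ ≤ lam i} := by
      ext p; simp [hQdef, Set.mem_iInter]
    rw [this]
    exact isClosed_iInter fun i =>
      isClosed_le (Continuous.inner continuous_id continuous_const) continuous_const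
  have hQm : ∀ lam, MeasurableSet (Q lam) := fun lam => (hQc lam).measurableSet
  obtain ⟨ε, hε, hball⟩ := Metric.eventually_nhds_iff.mp hbdd
  set lamp : ι → ℝ := fun i => lam₀ i + ε / 2 with hlampdef
  have hlamp_bdd : Bornology.IsBounded (Q lamp) := by
    apply hball
    rw [dist_pi_lt_iff hε]
    intro i
    simp only [hlampdef, Real.dist_eq]
    rw [show lam₀ i + ε / 2 - lam₀ i = ε / 2 by ring, abs_of_pos (by linarith)]
    linarith
  have hcomp : IsCompact (Q lamp) :=
    Metric.isCompact_of_isClosed_isBounded (hQc lamp) hlamp_bdd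
  have hint : IntegrableOn R (Q lamp) := hR.continuousOn.integrableOn_compact hcomp
  have hbound : Integrable ((Q lamp).indicator R) :=
    hint.integrable_indicator (hQm lamp)
  show Tendsto (fun lam => ∫ p in Q lam, R p) (nhds lam₀) (nhds (∫ p in Q lam₀, R p))
  have hrw : ∀ lam, ∫ p in Q lam, R p = ∫ p, (Q lam).indicator R p :=
    fun lam => (integral_indicator (hQm lam)).symm
  simp only [hrw]
  apply tendsto_integral_filter_of_dominated_convergence ((Q lamp).indicator R)
  · exact Eventually.of_forall fun lam => hR.aestronglyMeasurable.indicator (hQm lam)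
  · have hev : ∀ᶠ lam in nhds lam₀, ∀ i, lam i ≤ lamp i := by
      rw [eventually_all]
      intro i
      have hlt : lam₀ i < lamp i := by simp [hlampdef]; linarith
      exact ((continuous_apply i).tendsto lam₀).eventually (eventually_le_nhds hlt)
    filter_upwards [hev] with lam hlam
    refine Eventually.of_forall fun p => ?_
    rw [Real.norm_of_nonneg (Set.indicator_nonneg (fun x _ => hR0 x) p)]
    exact Set.indicator_le_indicator_of_subset
      (show Q lam ⊆ Q lamp from fun q hq i => (hq i).trans (hlam i)) hR0 p
  · exact hbound
  · have hnull : volume (⋃ i, {p : EuclideanSpace ℝ (Fin d) | ⟪p, e i⟫ = lam₀ i}) = 0 :=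
      measure_iUnion_null fun i => hyperplane_null (e i) (he i) (lam₀ i)
    filter_upwards [measure_eq_zero_iff_ae_notMem.mp hnull] with p hp
    simp only [Set.mem_iUnion, not_exists, Set.mem_setOf_eq] at hp
    by_cases hpQ : p ∈ Q lam₀
    · have hstrict : ∀ i, ⟪p, e i⟫ < lam₀ i := fun i => lt_of_le_of_ne (hpQ i) (hp i)
      have hev : ∀ᶠ lam in nhds lam₀, p ∈ Q lam := by
        have h' : ∀ᶠ lam in nhds lam₀, ∀ i, ⟪p, e i⟫ < lam i := by
          rw [eventually_all]
          intro i
          exact ((continuous_apply i).tendsto lam₀).eventually (Ioi_mem_nhds (hstrict i))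
        exact h'.mono fun lam h i => (h i).le
      have heq : (fun lam => (Q lam).indicator R p)
          =ᶠ[nhds lam₀] fun _ => (Q lam₀).indicator R p :=
        hev.mono fun lam h => by simp only [Set.indicator_of_mem h, Set.indicator_of_mem hpQ]
      exact Filter.Tendsto.congr' heq.symm tendsto_const_nhds
    · obtain ⟨i, hi⟩ : ∃ i, lam₀ i < ⟪p, e i⟫ := by
        by_contra h
        push_neg at h
        exact hpQ fun i => h i
      have hev : ∀ᶠ lam in nhds lam₀, p ∉ Q lam :=
        (((continuous_apply i).tendsto lam₀).eventually (Iio_mem_nhds hi)).mono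
          fun lam h hQl => absurd (hQl i) (not_le.mpr h)
      have heq : (fun lam => (Q lam).indicator R p)
          =ᶠ[nhds lam₀] fun _ => (Q lam₀).indicator R p :=
        hev.mono fun lam h => by
          simp only [Set.indicator_of_notMem h, Set.indicator_of_notMem hpQ]
      exact Filter.Tendsto.congr' heq.symm tendsto_const_nhds
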